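/- Let Γ act properly discontinuously, freely, and by isometries on a proper metric space X with basepoint o, with Dirichlet domain D defined by face-pairing elements γ₁,…,γ_m, and assume o lies in the interior of D (i.e., o is the unique point of D in its Γ-orbit). Then for every γ ∈ Γ the following reduction algorithm terminates and outputs γ: starting from x = γ·o, repeatedly replace x by γᵢ⁻¹·x for some i with d(γᵢ⁻¹·x, o) < d(x,o) while recording γᵢ, until x ∈ D; then γ equals the product of the recorded elements in order. -/

import Mathlib

open Set

/-- Correctness of the Dirichlet domain reduction algorithm: for every `γ ∈ Γ` there
is a finite list of face-pairing elements whose successive inverse applications to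
`γ·o` strictly decrease the distance to `o` at each step, end inside `D`, and whose
ordered product equals `γ`. -/
theorem stmt14 {G X : Type*} [Group G] [MetricSpace X] [ProperSpace X]
    [MulAction G X] (hiso : ∀ g : G, Isometry (fun x : X => g • x))
    [ProperlyDiscontinuousSMul G X]
    (hfree : ∀ (g : G) (x : X), g • x = x → g = 1)
    (o : X) (m : ℕ) (γs : Fin m → G)
    (D : Set X) (hD : D = {y : X | ∀ i : Fin m, dist y o ≤ dist y (γs i • o)})
    (ho : ∀ g : G, g • o ∈ D → g • o = o)
    (hred : ∀ x : X, x ∉ D → ∃ i : Fin m, dist ((γs i)⁻¹ • x) o < dist x o)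
    (γ : G) :
    ∃ L : List (Fin m),
      (L.map γs).prod = γ ∧
      (∀ k : ℕ, k < L.length →
        dist ((((L.take (k + 1)).map γs).prod)⁻¹ • γ • o) o <
          dist ((((L.take k).map γs).prod)⁻¹ • γ • o) o) ∧
      ((((L.map γs).prod)⁻¹ • γ • o) ∈ D) := by
  classical
  set Sg : G → Set G := fun g => {h : G | dist (h • o) o < dist (g • o) o} with hSg
  have hfin : ∀ g : G, (Sg g).Finite := by
    intro g
    have hK : IsCompact (Metric.closedBall o (dist (g • o) o)) :=
      isCompact_closedBall o _
    have hfd := ProperlyDiscontinuousSMul.finite_disjoint_inter_image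
      (Γ := G) (T := X) hK hK
    refine hfd.subset ?_
    intro h hh
    simp only [hSg, mem_setOf_eq] at hh
    rw [mem_setOf_eq]
    refine ⟨h • o, ⟨o, ?_, rfl⟩, Metric.mem_closedBall.2 hh.le⟩
    exact Metric.mem_closedBall.2 (by simp [dist_nonneg])
  suffices H : ∀ n : ℕ, ∀ g : G, (Sg g).ncard ≤ n →
      ∃ L : List (Fin m),
        (L.map γs).prod = g ∧
        (∀ k : ℕ, k < L.length →
          dist ((((L.take (k + 1)).map γs).prod)⁻¹ • g • o) o <
            dist ((((L.take k).map γs).prod)⁻¹ • g • o) o) ∧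
        ((((L.map γs).prod)⁻¹ • g • o) ∈ D) by
    exact H _ γ le_rfl
  intro n
  induction n with
  | zero =>
    intro g hcard
    by_cases hgD : g • o ∈ D
    · have hg1 : g = 1 := hfree g o (ho g hgD)
      refine ⟨[], by simp [hg1], by simp, by simpa using hgD⟩
    · obtain ⟨i, hi⟩ := hred (g • o) hgD
      exfalso
      have hmem : (γs i)⁻¹ * g ∈ Sg g := by
        simp only [hSg, mem_setOf_eq, mul_smul]
        exact hi
      have : 0 < (Sg g).ncard := (Set.ncard_pos (hfin g)).2 ⟨_, hmem⟩
      omega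
  | succ n ih =>
    intro g hcard
    by_cases hgD : g • o ∈ D
    · have hg1 : g = 1 := hfree g o (ho g hgD)
      refine ⟨[], by simp [hg1], by simp, by simpa using hgD⟩
    · obtain ⟨i, hi⟩ := hred (g • o) hgD
      set g' : G := (γs i)⁻¹ * g with hg'
      have hg'o : g' • o = (γs i)⁻¹ • g • o := by rw [hg', mul_smul]
      have hstep : dist (g' • o) o < dist (g • o) o := by rw [hg'o]; exact hi
      have hmem : g' ∈ Sg g := by simpa [hSg] using hstep
      have hss : Sg g' ⊂ Sg g := by
        refine (Set.ssubset_iff_of_subset ?_).2 ⟨g', hmem, ?_⟩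
        · intro h hh
          simp only [hSg, mem_setOf_eq] at hh ⊢
          exact hh.trans hstep
        · simp [hSg]
      have hlt : (Sg g').ncard < (Sg g).ncard := Set.ncard_lt_ncard hss (hfin g)
      obtain ⟨L', hprod, hdec, hend⟩ := ih g' (by omega)
      have key : ∀ j : ℕ,
          ((((i :: L').take (j + 1)).map γs).prod)⁻¹ • g • o
            = (((L'.take j).map γs).prod)⁻¹ • g' • o := by
        intro j
        simp only [List.take_succ_cons, List.map_cons, List.prod_cons, mul_inv_rev,
          mul_smul, hg'o]
      refine ⟨i :: L', ?_, ?_, ?_⟩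
      · rw [List.map_cons, List.prod_cons, hprod, hg', mul_inv_cancel_left]
      · intro k hk
        cases k with
        | zero =>
          rw [key 0]
          simpa [hg'o] using hstep
        | succ k =>
          rw [key (k + 1), key k]
          exact hdec k (by simpa using hk)
      · have : (((i :: L').map γs).prod)⁻¹ • g • o
            = ((L'.map γs).prod)⁻¹ • g' • o := by
          simp only [List.map_cons, List.prod_cons, mul_inv_rev, mul_smul, hg'o]
        rw [this]
        exact hend
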